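/- Let E, F be dyadic wavelet sets and for n, k ∈ ℤ set E_{n,k} = E ∩ (F − 2nπ) ∩ 2^{-k}F. For a nonzero integer n, let [n] denote the smallest integer k such that 2^k·n ∈ ℤ (equivalently, [n] is the negative of the 2-adic valuation of n). Then D_E^F = D_F^E modulo null sets if and only if for all nonzero integers n, k, m, l: whenever E_{n,k} ∩ (2^l E_{m,l} − 2nπ) has positive Lebesgue measure, one has [n] + l = [m]. -/

import Mathlib

open MeasureTheory Set
open scoped Real symmDiff

noncomputable section

/-- An a.e. (modulo Lebesgue-null sets) partition of the set `A` by the family `P`. -/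
def IsAEPartition {ι : Type*} (P : ι → Set ℝ) (A : Set ℝ) : Prop :=
  volume (A ∆ (⋃ i, P i)) = 0 ∧ ∀ i j : ι, i ≠ j → volume (P i ∩ P j) = 0

/-- `E ⊆ ℝ` is a dyadic wavelet set: its `2πℤ`-translates and its `2ℤ`-dilates each
partition `ℝ` modulo Lebesgue-null sets. -/
def IsDyadicWaveletSet (E : Set ℝ) : Prop :=
  MeasurableSet E ∧
  (∀ᵐ x : ℝ ∂volume, ∃! n : ℤ, x + 2 * Real.pi * n ∈ E) ∧
  (∀ᵐ x : ℝ ∂volume, ∃! k : ℤ, (2 : ℝ) ^ k * x ∈ E)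

/-- `σ` is (a representative of) the interpolation map `σ_E^F` for wavelet sets `E, F`. -/
def IsInterpolationMap (E F : Set ℝ) (σ : ℝ → ℝ) : Prop :=
  Measurable σ ∧ σ 0 = 0 ∧
  (∀ᵐ s : ℝ ∂volume, s ∈ E → σ s ∈ F ∧ ∃ n : ℤ, σ s - s = 2 * Real.pi * n) ∧
  (∀ n : ℤ, ∀ᵐ s : ℝ ∂volume, (2 : ℝ) ^ (-n) * s ∈ E →
    σ s = (2 : ℝ) ^ n * σ ((2 : ℝ) ^ (-n) * s))

/-- The `2π`-congruence domain of a map `σ`. -/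
def CongruenceDomain (σ : ℝ → ℝ) : Set ℝ :=
  {s : ℝ | ∃ n : ℤ, σ s - s = 2 * Real.pi * n}

/-- `A` is `2π`-translation congruent to `B`. -/
def TransCongruent (A B : Set ℝ) : Prop :=
  ∃ P : ℤ → Set ℝ, (∀ n, MeasurableSet (P n)) ∧ IsAEPartition P A ∧
    IsAEPartition (fun (n : ℤ) => (fun x => x + 2 * Real.pi * (n : ℝ)) '' P n) B

/-- `A` is `2`-dilation congruent to `B`. -/
def DilCongruent (A B : Set ℝ) : Prop :=
  ∃ P : ℤ → Set ℝ, (∀ n, MeasurableSet (P n)) ∧ IsAEPartition P A ∧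
    IsAEPartition (fun (n : ℤ) => (fun x => (2 : ℝ) ^ n * x) '' P n) B

/-- `E_{n,k} = E ∩ (F − 2nπ) ∩ 2^{-k}F`. -/
def Enk (E F : Set ℝ) (n k : ℤ) : Set ℝ :=
  E ∩ {x : ℝ | x + 2 * Real.pi * n ∈ F} ∩ {x : ℝ | (2 : ℝ) ^ k * x ∈ F}

/-- `E_{n,k} ∩ (2^l E_{m,l} − 2nπ)`. -/
def EnkTest (E F : Set ℝ) (n k m l : ℤ) : Set ℝ :=
  Enk E F n k ∩ {x : ℝ | (2 : ℝ) ^ (-l) * (x + 2 * Real.pi * n) ∈ Enk E F m l}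

/-- `[n]`: the smallest integer `k` with `2^k·n ∈ ℤ`, i.e. the negative of the
`2`-adic valuation of `n` (for `n ≠ 0`). -/
def bracket (n : ℤ) : ℤ := -(padicValInt 2 n)

/- ### Auxiliary lemmas -/

lemma my_bracket_neg (n : ℤ) : bracket (-n) = bracket n := by
  unfold bracket padicValInt
  rw [Int.natAbs_neg]

lemma my_two_zpow_mul (a b : ℤ) (x : ℝ) :
    (2:ℝ)^a * ((2:ℝ)^b * x) = (2:ℝ)^(a+b) * x := by
  rw [← mul_assoc, ← zpow_add₀ (two_ne_zero : (2:ℝ) ≠ 0)]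

lemma my_ae_affine {R : ℝ → Prop} (h : ∀ᵐ w : ℝ, R w) (a : ℤ) (c : ℝ) :
    ∀ᵐ z : ℝ, R ((2:ℝ)^a * z + c) := by
  rw [MeasureTheory.ae_iff] at h ⊢
  have h2 : ((2:ℝ)^a) ≠ 0 := zpow_ne_zero _ two_ne_zero
  have key : {z : ℝ | ¬ R ((2:ℝ)^a * z + c)}
      = ((2:ℝ)^a * ·) ⁻¹' ((· + c) ⁻¹' {w | ¬ R w}) := rfl
  rw [key, Real.volume_preimage_mul_left h2, measure_preimage_add_right, h, mul_zero]

lemma my_exists_int_iff (n j : ℤ) (hn : n ≠ 0) :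
    (∃ i : ℤ, (2:ℝ)^j * (n:ℝ) = (i:ℝ)) ↔ bracket n ≤ j := by
  rcases le_or_gt 0 j with hj | hj
  · constructor
    · intro _
      have : (0:ℤ) ≤ (padicValInt 2 n : ℤ) := Int.ofNat_nonneg _
      unfold bracket; omega
    · intro _
      refine ⟨2 ^ j.toNat * n, ?_⟩
      push_cast
      rw [← zpow_natCast (2:ℝ) j.toNat, Int.toNat_of_nonneg hj]
  · set t := (-j).toNat with ht
    have hjt : j = -(t:ℤ) := by omega
    have h2 : (∃ i : ℤ, (2:ℝ)^j * n = i) ↔ ((2:ℤ)^t ∣ n) := by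
      constructor
      · rintro ⟨i, hi⟩
        refine ⟨i, ?_⟩
        rw [hjt, zpow_neg, zpow_natCast,
          inv_mul_eq_iff_eq_mul₀ (by positivity)] at hi
        exact_mod_cast hi
      · rintro ⟨i, hi⟩
        refine ⟨i, ?_⟩
        rw [hjt, zpow_neg, zpow_natCast, inv_mul_eq_iff_eq_mul₀ (by positivity)]
        exact_mod_cast congrArg (fun x : ℤ => (x:ℝ)) hi
    have h3 := padicValInt_dvd_iff (p := 2) t n
    push_cast at h3
    rw [h2, h3]
    unfold bracket
    constructor
    · rintro (h | h)
      · exact absurd h hn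
      · omega
    · intro h; right; omega

lemma my_exists_of_pos {S : Set ℝ} {P : ℝ → Prop} (hS : 0 < volume S)
    (hP : ∀ᵐ x : ℝ, P x) : ∃ x ∈ S, P x := by
  by_contra hcon
  push_neg at hcon
  have hsub : S ⊆ {x | ¬ P x} := fun x hx => hcon x hx
  have hle := measure_mono (μ := volume) hsub
  rw [MeasureTheory.ae_iff] at hP
  rw [hP] at hle
  exact absurd (le_antisymm hle zero_le) hS.ne'

/-- pointwise goodness -/
def GoodPt (E F : Set ℝ) (σ τ : ℝ → ℝ) (w : ℝ) : Prop :=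
  (∃! n : ℤ, w + 2 * Real.pi * n ∈ E) ∧ (∃! k : ℤ, (2:ℝ)^k * w ∈ E) ∧
  (∃! n : ℤ, w + 2 * Real.pi * n ∈ F) ∧ (∃! k : ℤ, (2:ℝ)^k * w ∈ F) ∧
  (w ∈ E → σ w ∈ F ∧ ∃ n : ℤ, σ w - w = 2 * Real.pi * n) ∧
  (w ∈ F → τ w ∈ E ∧ ∃ n : ℤ, τ w - w = 2 * Real.pi * n) ∧
  (∀ j : ℤ, (2:ℝ)^(-j) * w ∈ E → σ w = (2:ℝ)^j * σ ((2:ℝ)^(-j) * w)) ∧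
  (∀ j : ℤ, (2:ℝ)^(-j) * w ∈ F → τ w = (2:ℝ)^j * τ ((2:ℝ)^(-j) * w))

lemma goodPt_swap {E F : Set ℝ} {σ τ : ℝ → ℝ} {w : ℝ} (h : GoodPt E F σ τ w) :
    GoodPt F E τ σ w := by
  obtain ⟨h1, h2, h3, h4, h5, h6, h7, h8⟩ := h
  exact ⟨h3, h4, h1, h2, h6, h5, h8, h7⟩

lemma goodPt_ae {E F : Set ℝ} {σ τ : ℝ → ℝ} (hE : IsDyadicWaveletSet E)
    (hF : IsDyadicWaveletSet F) (hσ : IsInterpolationMap E F σ)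
    (hτ : IsInterpolationMap F E τ) : ∀ᵐ w : ℝ, GoodPt E F σ τ w := by
  have h7 : ∀ᵐ w : ℝ, ∀ j : ℤ, (2:ℝ)^(-j) * w ∈ E → σ w = (2:ℝ)^j * σ ((2:ℝ)^(-j) * w) :=
    MeasureTheory.ae_all_iff.mpr fun j => hσ.2.2.2 j
  have h8 : ∀ᵐ w : ℝ, ∀ j : ℤ, (2:ℝ)^(-j) * w ∈ F → τ w = (2:ℝ)^j * τ ((2:ℝ)^(-j) * w) :=
    MeasureTheory.ae_all_iff.mpr fun j => hτ.2.2.2 j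
  filter_upwards [hE.2.1, hE.2.2, hF.2.1, hF.2.2, hσ.2.2.1, hτ.2.2.1, h7, h8] with
    w g1 g2 g3 g4 g5 g6 g7 g8
  exact ⟨g1, g2, g3, g4, g5, g6, g7, g8⟩

/-- characterization of membership in the congruence domain -/
lemma sigma_char {E F : Set ℝ} {σ τ : ℝ → ℝ} (z : ℝ) (j n : ℤ)
    (hz : GoodPt E F σ τ z) (hx : GoodPt E F σ τ ((2:ℝ)^(-j) * z))
    (hxE : (2:ℝ)^(-j) * z ∈ E)
    (hxF : (2:ℝ)^(-j) * z + 2 * Real.pi * n ∈ F) :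
    z ∈ CongruenceDomain σ ↔ ∃ i : ℤ, (2:ℝ)^j * (n:ℝ) = (i:ℝ) := by
  obtain ⟨-, -, -, -, -, -, hS4, -⟩ := hz
  obtain ⟨-, -, hPF, -, hS1, -, -, -⟩ := hx
  set x := (2:ℝ)^(-j) * z with hxdef
  have hσz : σ z = (2:ℝ)^j * σ x := hS4 j hxE
  obtain ⟨hσxF, n', hn'⟩ := hS1 hxE
  have hσx : σ x = x + 2 * Real.pi * n' := by linarith
  have hn'n : n' = n := by
    obtain ⟨n₀, hn₀, hu⟩ := hPF
    have e1 : n' = n₀ := hu n' (by show x + 2 * Real.pi * n' ∈ F; rw [← hσx]; exact hσxF)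
    have e2 : n = n₀ := hu n hxF
    omega
  have hzx : (2:ℝ)^j * x = z := by
    rw [hxdef, ← mul_assoc, ← zpow_add₀ (two_ne_zero), add_neg_cancel, zpow_zero, one_mul]
  have hσz2 : σ z - z = 2 * Real.pi * ((2:ℝ)^j * n) := by
    rw [hσz, hσx, hn'n, ← hzx]; ring
  have hπ : (2 * Real.pi) ≠ 0 := mul_ne_zero two_ne_zero Real.pi_ne_zero
  simp only [CongruenceDomain, Set.mem_setOf_eq]
  constructor
  · rintro ⟨i, hi⟩
    refine ⟨i, mul_left_cancel₀ hπ ?_⟩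
    rw [← hσz2, hi]
  · rintro ⟨i, hi⟩
    exact ⟨i, by rw [hσz2, hi]⟩

/-- Theorem 3(ii) of the paper.  For dyadic wavelet sets `E, F`,
`D_E^F = D_F^E` modulo null sets iff whenever `E_{n,k} ∩ (2^l E_{m,l} − 2nπ)` has
positive measure for nonzero integers `n, k, m, l`, one has `[n] + l = [m]`. -/
theorem stmt_7 (E F : Set ℝ) (hE : IsDyadicWaveletSet E) (hF : IsDyadicWaveletSet F)
    (σ τ : ℝ → ℝ) (hσ : IsInterpolationMap E F σ) (hτ : IsInterpolationMap F E τ) :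
    volume ((CongruenceDomain σ) ∆ (CongruenceDomain τ)) = 0 ↔
      (∀ n k m l : ℤ, n ≠ 0 → k ≠ 0 → m ≠ 0 → l ≠ 0 →
        0 < volume (EnkTest E F n k m l) → bracket n + l = bracket m) := by

  have hGood : ∀ᵐ w : ℝ, GoodPt E F σ τ w := goodPt_ae hE hF hσ hτ
  rw [measure_symmDiff_eq_zero_iff, Filter.eventuallyEq_set]
  constructor
  · -- forward direction
    intro hae n k m l hn hk hm hl hpos
    have hmaster : ∀ᵐ x : ℝ, ∀ (a : ℤ) (q : ℚ),
        GoodPt E F σ τ ((2:ℝ)^a * x + 2 * Real.pi * (q:ℝ)) ∧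
        ((2:ℝ)^a * x + 2 * Real.pi * (q:ℝ) ∈ CongruenceDomain σ ↔
          (2:ℝ)^a * x + 2 * Real.pi * (q:ℝ) ∈ CongruenceDomain τ) := by
      rw [MeasureTheory.ae_all_iff]
      intro a
      rw [MeasureTheory.ae_all_iff]
      intro q
      exact my_ae_affine (hGood.and hae) a _
    obtain ⟨x, hxT, hxP⟩ := my_exists_of_pos hpos hmaster
    simp only [EnkTest, Enk, Set.mem_inter_iff, Set.mem_setOf_eq] at hxT
    obtain ⟨⟨⟨hxE, hxnF⟩, hxkF⟩, ⟨hx2E, hx2mF⟩, hx2lF⟩ := hxT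
    set x₂ := (2:ℝ)^(-l) * (x + 2 * Real.pi * (n:ℝ)) with hx₂
    have hw : (2:ℝ)^l * x₂ = x + 2 * Real.pi * (n:ℝ) := by
      rw [hx₂, my_two_zpow_mul, show l + -l = 0 from by ring, zpow_zero, one_mul]
    have hid : ∀ j : ℤ, (2:ℝ)^(j-l) * x + 2 * Real.pi * (((2:ℚ)^(j-l) * (n:ℚ) : ℚ):ℝ)
        = (2:ℝ)^j * x₂ := by
      intro j
      have hc : (((2:ℚ)^(j-l) * (n:ℚ) : ℚ):ℝ) = (2:ℝ)^(j-l) * (n:ℝ) := by push_cast; ring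
      rw [hc, hx₂, my_two_zpow_mul, show j + -l = j - l from by ring]
      ring
    have hGj : ∀ j : ℤ, GoodPt E F σ τ ((2:ℝ)^j * x₂) := fun j => by
      have h := (hxP (j-l) ((2:ℚ)^(j-l) * (n:ℚ))).1
      rwa [hid j] at h
    have hDj : ∀ j : ℤ, ((2:ℝ)^j * x₂ ∈ CongruenceDomain σ ↔
        (2:ℝ)^j * x₂ ∈ CongruenceDomain τ) := fun j => by
      have h := (hxP (j-l) ((2:ℚ)^(j-l) * (n:ℚ))).2
      rwa [hid j] at h
    have hinv : ∀ j : ℤ, (2:ℝ)^(-j) * ((2:ℝ)^j * x₂) = x₂ := fun j => by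
      rw [my_two_zpow_mul, show -j + j = 0 from by ring, zpow_zero, one_mul]
    have hGx₂ : GoodPt E F σ τ x₂ := by
      have h := hGj 0
      rwa [zpow_zero, one_mul] at h
    have hσside : ∀ j : ℤ, ((2:ℝ)^j * x₂ ∈ CongruenceDomain σ ↔
        ∃ i : ℤ, (2:ℝ)^j * (m:ℝ) = (i:ℝ)) := fun j =>
      sigma_char _ j m (hGj j) (by rw [hinv j]; exact hGx₂) (by rw [hinv j]; exact hx2E)
        (by rw [hinv j]; exact hx2mF)
    have hτside : ∀ j : ℤ, ((2:ℝ)^j * x₂ ∈ CongruenceDomain τ ↔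
        ∃ i : ℤ, (2:ℝ)^(j-l) * (((-n : ℤ)):ℝ) = (i:ℝ)) := fun j => by
      have e1 : (2:ℝ)^(-(j-l)) * ((2:ℝ)^j * x₂) = (2:ℝ)^l * x₂ := by
        rw [my_two_zpow_mul, show -(j-l) + j = l from by ring]
      refine sigma_char (E := F) (F := E) (σ := τ) (τ := σ) _ (j-l) (-n)
        (goodPt_swap (hGj j)) (by rw [e1]; exact goodPt_swap (hGj l))
        (by rw [e1]; exact hx2lF) ?_
      rw [e1, hw]
      have e2 : x + 2 * Real.pi * (n:ℝ) + 2 * Real.pi * (((-n : ℤ)):ℝ) = x := by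
        push_cast; ring
      rw [e2]; exact hxE
    have hkey : ∀ j : ℤ, (bracket m ≤ j ↔ bracket n + l ≤ j) := fun j => by
      have h1 := (hσside j).symm.trans ((hDj j).trans (hτside j))
      rw [my_exists_int_iff m j hm, my_exists_int_iff (-n) (j-l) (neg_ne_zero.mpr hn),
        my_bracket_neg] at h1
      omega
    have h1 := hkey (bracket m)
    have h2 := hkey (bracket n + l)
    omega
  · -- backward direction
    intro hyp
    have hnull : ∀ᵐ w : ℝ, ∀ n k m l : ℤ, n ≠ 0 → k ≠ 0 → m ≠ 0 → l ≠ 0 →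
        bracket n + l ≠ bracket m → w ∉ EnkTest E F n k m l := by
      rw [MeasureTheory.ae_all_iff]; intro n
      rw [MeasureTheory.ae_all_iff]; intro k
      rw [MeasureTheory.ae_all_iff]; intro m
      rw [MeasureTheory.ae_all_iff]; intro l
      by_cases h : n ≠ 0 ∧ k ≠ 0 ∧ m ≠ 0 ∧ l ≠ 0 ∧ bracket n + l ≠ bracket m
      · obtain ⟨h1, h2, h3, h4, h5⟩ := h
        have hz : volume (EnkTest E F n k m l) = 0 := by
          by_contra hne
          exact h5 (hyp n k m l h1 h2 h3 h4 (pos_iff_ne_zero.mpr hne))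
        filter_upwards [measure_eq_zero_iff_ae_notMem.mp hz] with w hw
        exact fun _ _ _ _ _ => hw
      · exact Filter.Eventually.of_forall fun w h1 h2 h3 h4 h5 => absurd ⟨h1, h2, h3, h4, h5⟩ h
    have hmaster : ∀ᵐ z : ℝ, ∀ (a : ℤ) (q : ℚ),
        GoodPt E F σ τ ((2:ℝ)^a * z + 2 * Real.pi * (q:ℝ)) ∧
        (∀ n k m l : ℤ, n ≠ 0 → k ≠ 0 → m ≠ 0 → l ≠ 0 → bracket n + l ≠ bracket m →
          (2:ℝ)^a * z + 2 * Real.pi * (q:ℝ) ∉ EnkTest E F n k m l) := by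
      rw [MeasureTheory.ae_all_iff]
      intro a
      rw [MeasureTheory.ae_all_iff]
      intro q
      exact my_ae_affine (hGood.and hnull) a _
    filter_upwards [hmaster] with z hz
    have hzG : GoodPt E F σ τ z := by
      have h := (hz 0 0).1
      simpa using h
    obtain ⟨κ, hκE, -⟩ := hzG.2.1
    have hxE : (2:ℝ)^(-(-κ)) * z ∈ E := by rw [neg_neg]; exact hκE
    set j := -κ with hj
    have hxG : GoodPt E F σ τ ((2:ℝ)^(-j) * z) := by
      have h := (hz (-j) 0).1
      simpa using h
    obtain ⟨n, hnF, hnu⟩ := hxG.2.2.1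
    obtain ⟨k, hkF, hku⟩ := hxG.2.2.2.1
    have hσiff : z ∈ CongruenceDomain σ ↔ ∃ i : ℤ, (2:ℝ)^j * (n:ℝ) = (i:ℝ) :=
      sigma_char z j n hzG hxG hxE hnF
    have hyid : (2:ℝ)^(k-j) * z = (2:ℝ)^k * ((2:ℝ)^(-j) * z) := by
      rw [my_two_zpow_mul, show k + -j = k - j from by ring]
    have hyG : GoodPt E F σ τ ((2:ℝ)^k * ((2:ℝ)^(-j) * z)) := by
      have h := (hz (k-j) 0).1
      rw [show (((0:ℚ)):ℝ) = 0 from by norm_num, mul_zero, add_zero, hyid] at h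
      exact h
    obtain ⟨m', hm'E, hm'u⟩ := hyG.1
    have hτiff : z ∈ CongruenceDomain τ ↔ ∃ i : ℤ, (2:ℝ)^(j-k) * ((m' : ℤ):ℝ) = (i:ℝ) := by
      have e1 : (2:ℝ)^(-(j-k)) * z = (2:ℝ)^k * ((2:ℝ)^(-j) * z) := by
        rw [show -(j-k) = k - j from by ring, hyid]
      refine sigma_char (E := F) (F := E) (σ := τ) (τ := σ) z (j-k) m'
        (goodPt_swap hzG) (by rw [e1]; exact goodPt_swap hyG) (by rw [e1]; exact hkF) ?_
      rw [e1]; exact hm'E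
    by_cases hn0 : n = 0
    · have hxF : (2:ℝ)^(-j) * z ∈ F := by
        have h := hnF; rw [hn0] at h; simpa using h
      have hk0 : k = 0 := (hku 0 (by simpa using hxF)).symm
      have hm'0 : m' = 0 := by
        refine (hm'u 0 ?_).symm
        show (2:ℝ)^k * ((2:ℝ)^(-j) * z) + 2 * Real.pi * ((0:ℤ):ℝ) ∈ E
        rw [hk0]
        simpa using hxE
      rw [hσiff, hτiff, hn0, hm'0]
      exact iff_of_true ⟨0, by simp⟩ ⟨0, by simp⟩
    · -- n ≠ 0 case
      have hk0 : k ≠ 0 := by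
        intro hk0
        apply hn0
        have hxF : (2:ℝ)^(-j) * z ∈ F := by
          have h := hkF; rw [hk0] at h; simpa using h
        exact (hnu 0 (by simpa using hxF)).symm
      have hm'0 : m' ≠ 0 := by
        intro hm'0
        have hyE : (2:ℝ)^k * ((2:ℝ)^(-j) * z) ∈ E := by
          have h := hm'E; rw [hm'0] at h; simpa using h
        obtain ⟨κ', hκ', hκ'u⟩ := hyG.2.1
        have e0 : (0:ℤ) = κ' := hκ'u 0 (by simpa using hyE)
        have ek : -k = κ' := hκ'u (-k) (by
          show (2:ℝ)^(-k) * ((2:ℝ)^k * ((2:ℝ)^(-j) * z)) ∈ E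
          rw [my_two_zpow_mul, show -k + k = 0 from by ring, zpow_zero, one_mul]
          exact hxE)
        exact hk0 (by omega)
      have hcast : (((m' : ℚ)):ℝ) = ((m' : ℤ):ℝ) := by push_cast; ring
      have hx'G : GoodPt E F σ τ ((2:ℝ)^k * ((2:ℝ)^(-j) * z) + 2 * Real.pi * ((m':ℤ):ℝ)) := by
        have h := (hz (k-j) ((m' : ℚ))).1
        rwa [hcast, hyid] at h
      have hx'nmem := (hz (k-j) ((m' : ℚ))).2
      rw [hcast, hyid] at hx'nmem
      obtain ⟨k', hk'F, -⟩ := hx'G.2.2.2.1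
      have hyF : (2:ℝ)^k * ((2:ℝ)^(-j) * z) ∈ F := hkF
      have hk'0 : k' ≠ 0 := by
        intro hk'0
        have hx'F : (2:ℝ)^k * ((2:ℝ)^(-j) * z) + 2 * Real.pi * ((m':ℤ):ℝ) ∈ F := by
          have h := hk'F; rw [hk'0] at h; simpa using h
        obtain ⟨ν, hν, hνu⟩ := hx'G.2.2.1
        have e0 : (0:ℤ) = ν := hνu 0 (by simpa using hx'F)
        have e1 : -m' = ν := hνu (-m') (by
          show (2:ℝ)^k * ((2:ℝ)^(-j) * z) + 2 * Real.pi * ((m':ℤ):ℝ)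
              + 2 * Real.pi * (((-m' : ℤ)):ℝ) ∈ F
          have e2 : (2:ℝ)^k * ((2:ℝ)^(-j) * z) + 2 * Real.pi * ((m':ℤ):ℝ)
              + 2 * Real.pi * (((-m' : ℤ)):ℝ) = (2:ℝ)^k * ((2:ℝ)^(-j) * z) := by
            push_cast; ring
          rw [e2]; exact hyF)
        exact hm'0 (by omega)
      have ex' : (2:ℝ)^k * ((2:ℝ)^(-j) * z) + 2 * Real.pi * ((m':ℤ):ℝ)
          + 2 * Real.pi * (((-m' : ℤ)):ℝ) = (2:ℝ)^k * ((2:ℝ)^(-j) * z) := by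
        push_cast; ring
      have exx : (2:ℝ)^(-k) * ((2:ℝ)^k * ((2:ℝ)^(-j) * z)) = (2:ℝ)^(-j) * z := by
        rw [my_two_zpow_mul, show -k + k = 0 from by ring, zpow_zero, one_mul]
      have hmem : (2:ℝ)^k * ((2:ℝ)^(-j) * z) + 2 * Real.pi * ((m':ℤ):ℝ)
          ∈ EnkTest E F (-m') k' n k := by
        simp only [EnkTest, Enk, Set.mem_inter_iff, Set.mem_setOf_eq]
        refine ⟨⟨⟨hm'E, ?_⟩, hk'F⟩, ⟨?_, ?_⟩, ?_⟩
        · rw [ex']; exact hyF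
        · rw [ex', exx]; exact hxE
        · rw [ex', exx]; exact hnF
        · rw [ex', exx]; exact hkF
      have hbr : bracket (-m') + k = bracket n := by
        by_contra hne
        exact hx'nmem (-m') k' n k (neg_ne_zero.mpr hm'0) hk'0 hn0 hk0 hne hmem
      rw [my_bracket_neg] at hbr
      rw [hσiff, hτiff, my_exists_int_iff n j hn0, my_exists_int_iff m' (j-k) hm'0]
      omega
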